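/- Marginal coverage of split conformal prediction: let (X_1, Y_1), …, (X_n, Y_n), (X_{n+1}, Y_{n+1}) be an exchangeable sequence of random pairs (their joint distribution is invariant under every permutation of the n+1 indices), let s be a measurable non-conformity score function, and let α ∈ (0,1) satisfy ⌈(n+1)(1−α)⌉ ≤ n. Define q̂ as the ⌈(n+1)(1−α)⌉-th smallest value among the calibration scores s(X_1, Y_1), …, s(X_n, Y_n). Then the prediction set C(x) = {y : s(x, y) ≤ q̂} satisfies Pr[Y_{n+1} ∈ C(X_{n+1})] ≥ 1 − α, i.e., Pr[s(X_{n+1}, Y_{n+1}) ≤ q̂] ≥ 1 − α. -/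

import Mathlib

open MeasureTheory
open scoped ENNReal

/-- The `k`-th smallest value (1-indexed `k`-th order statistic) of the finite
family of reals `v : Fin n → ℝ`. -/
noncomputable def kthSmallest {n : ℕ} (v : Fin n → ℝ) (k : ℕ) : ℝ :=
  ((List.ofFn v).mergeSort (· ≤ ·)).getD (k - 1) 0

section Aux

open Finset

theorem SCMC.sorted_le_getD_iff (l : List ℝ) (hl : l.Pairwise (· ≤ ·)) :
    ∀ k, k < l.length → ∀ x : ℝ,
      (x ≤ l.getD k 0 ↔ l.countP (fun y => decide (y < x)) ≤ k) := by
  induction l with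
  | nil => intro k hk; simp at hk
  | cons a t ih =>
    have ha : ∀ y ∈ t, a ≤ y := (List.pairwise_cons.mp hl).1
    have ht : t.Pairwise (· ≤ ·) := (List.pairwise_cons.mp hl).2
    intro k hk x
    cases k with
    | zero =>
      rw [List.getD_cons_zero, List.countP_cons, Nat.le_zero]
      constructor
      · intro hxa
        have h1 : t.countP (fun y => decide (y < x)) = 0 := by
          rw [List.countP_eq_zero]
          intro y hy
          simp only [decide_eq_true_eq, not_lt]
          exact hxa.trans (ha y hy)
        rw [h1]
        simp [not_lt.mpr hxa]
      · intro h
        by_contra hxa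
        simp [not_le.mp hxa] at h
    | succ k =>
      rw [List.getD_cons_succ, List.countP_cons]
      have hk' : k < t.length := by simp at hk; omega
      by_cases hax : a < x
      · rw [ih ht k hk' x]
        have : (if decide (a < x) = true then 1 else 0) = 1 := by simp [hax]
        rw [this]
        omega
      · have hxa : x ≤ a := not_lt.mp hax
        have h1 : x ≤ t.getD k 0 := by
          rw [List.getD_eq_getElem _ _ hk']
          exact hxa.trans (ha _ (t.getElem_mem hk'))
        have h2 : t.countP (fun y => decide (y < x)) = 0 := by
          rw [List.countP_eq_zero]
          intro y hy
          simp only [decide_eq_true_eq, not_lt]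
          exact hxa.trans (ha y hy)
        rw [h2]
        have : (if decide (a < x) = true then 1 else 0) = 0 := by simp [hax]
        rw [this]
        simpa using h1

theorem SCMC.sorted_succ_le_countP (l : List ℝ) (hl : l.Pairwise (· ≤ ·)) :
    ∀ k, k < l.length →
      k + 1 ≤ l.countP (fun y => decide (y ≤ l.getD k 0)) := by
  induction l with
  | nil => intro k hk; simp at hk
  | cons a t ih =>
    have ha : ∀ y ∈ t, a ≤ y := (List.pairwise_cons.mp hl).1
    have ht : t.Pairwise (· ≤ ·) := (List.pairwise_cons.mp hl).2
    intro k hk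
    cases k with
    | zero => simp [List.countP_cons]
    | succ k =>
      rw [List.getD_cons_succ, List.countP_cons]
      have hk' : k < t.length := by simp at hk; omega
      have haQ : a ≤ t.getD k 0 := by
        rw [List.getD_eq_getElem _ _ hk']
        exact ha _ (t.getElem_mem hk')
      have := ih ht k hk'
      have h3 : (if decide (a ≤ t.getD k 0) = true then 1 else 0) = 1 :=
        if_pos (decide_eq_true haQ)
      rw [h3]
      omega

theorem SCMC.countP_ofFn_eq (m : ℕ) (v : Fin m → ℝ) (p : ℝ → Prop) [DecidablePred p] :
    (List.ofFn v).countP (fun y => decide (p y)) = (univ.filter (fun i => p (v i))).card := by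
  rw [List.ofFn_eq_map, List.countP_map]
  rw [Finset.card_def, Finset.filter_val, Fin.univ_def]
  simp only [← Multiset.countP_eq_card_filter, Multiset.coe_countP]
  rfl

theorem SCMC.le_kthSmallest_iff {m : ℕ} (v : Fin m → ℝ) (k : ℕ) (hk1 : 1 ≤ k) (hkm : k ≤ m)
    (x : ℝ) :
    x ≤ kthSmallest v k ↔ (univ.filter fun i => v i < x).card < k := by
  set l := (List.ofFn v).mergeSort (· ≤ ·) with hl
  have hsort : l.Pairwise (· ≤ ·) := List.pairwise_mergeSort' _ _
  have hlen : l.length = m := by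
    rw [hl, List.length_mergeSort, List.length_ofFn]
  have hkl : k - 1 < l.length := by omega
  have hperm : l.Perm (List.ofFn v) := List.mergeSort_perm _ _
  have := SCMC.sorted_le_getD_iff l hsort (k - 1) hkl x
  rw [kthSmallest, ← hl, this, hperm.countP_eq, SCMC.countP_ofFn_eq]
  omega

theorem SCMC.card_le_kthSmallest {m : ℕ} (w : Fin m → ℝ) (k : ℕ) (hk1 : 1 ≤ k) (hkm : k ≤ m) :
    k ≤ (univ.filter fun j => w j ≤ kthSmallest w k).card := by
  set l := (List.ofFn w).mergeSort (· ≤ ·) with hl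
  have hsort : l.Pairwise (· ≤ ·) := List.pairwise_mergeSort' _ _
  have hlen : l.length = m := by
    rw [hl, List.length_mergeSort, List.length_ofFn]
  have hkl : k - 1 < l.length := by omega
  have hperm : l.Perm (List.ofFn w) := List.mergeSort_perm _ _
  have h := SCMC.sorted_succ_le_countP l hsort (k - 1) hkl
  rw [hperm.countP_eq, SCMC.countP_ofFn_eq] at h
  show k ≤ (univ.filter fun j => w j ≤ kthSmallest w k).card
  rw [kthSmallest, ← hl]
  omega

end Aux

/-- Marginal coverage of split conformal prediction: for an
exchangeable sequence of random pairs `Z 0, …, Z n` (joint law invariant under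
every permutation of the `n+1` indices), a measurable non-conformity score `s`,
and `α ∈ (0,1)` with `⌈(n+1)(1-α)⌉ ≤ n`, letting `q̂` be the
`⌈(n+1)(1-α)⌉`-th smallest calibration score among `s (Z 0), …, s (Z (n-1))`,
the test score satisfies `Pr[s (Z n) ≤ q̂] ≥ 1-α`, i.e. the prediction set
`C(x) = {y : s (x, y) ≤ q̂}` covers `Y_{n+1}` with probability at least `1-α`. -/
theorem split_conformal_marginal_coverage
    {Ω 𝒳 𝒴 : Type*} [MeasurableSpace Ω] [MeasurableSpace 𝒳] [MeasurableSpace 𝒴]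
    [Fintype 𝒴] [Nonempty 𝒴]
    (μ : Measure Ω) [IsProbabilityMeasure μ]
    {n : ℕ} (Z : Fin (n + 1) → Ω → 𝒳 × 𝒴)
    (hZ : ∀ i, Measurable (Z i))
    (hexch : ∀ σ : Equiv.Perm (Fin (n + 1)),
      Measure.map (fun ω => fun i => Z (σ i) ω) μ
        = Measure.map (fun ω => fun i => Z i ω) μ)
    (s : 𝒳 × 𝒴 → ℝ) (hs : Measurable s)
    (α : ℝ) (hα : α ∈ Set.Ioo (0 : ℝ) 1)
    (hk : ⌈((n : ℝ) + 1) * (1 - α)⌉₊ ≤ n)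
    (qhat : Ω → ℝ)
    (hqhat : ∀ ω, qhat ω =
      kthSmallest (fun i : Fin n => s (Z i.castSucc ω)) ⌈((n : ℝ) + 1) * (1 - α)⌉₊) :
    ENNReal.ofReal (1 - α) ≤ μ {ω | s (Z (Fin.last n) ω) ≤ qhat ω} := by
  classical
  obtain ⟨hα0, hα1⟩ := hα
  set k : ℕ := ⌈((n : ℝ) + 1) * (1 - α)⌉₊ with hkdef
  have hkpos : (0 : ℝ) < ((n : ℝ) + 1) * (1 - α) := by
    have : (0:ℝ) < 1 - α := by linarith
    positivity
  have hk1 : 1 ≤ k := Nat.ceil_pos.mpr hkpos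
  set S : Fin (n + 1) → Ω → ℝ := fun i ω => s (Z i ω) with hSdef
  have hSmeas : ∀ i, Measurable (S i) := fun i => hs.comp (hZ i)
  -- the events
  set E : Fin (n + 1) → Set Ω :=
    fun j => {ω | (Finset.univ.filter fun i => S i ω < S j ω).card < k} with hEdef
  have hEmeas : ∀ j, MeasurableSet (E j) := by
    intro j
    have hrw : E j = (fun ω => ∑ i : Fin (n + 1), if S i ω < S j ω then (1:ℕ) else 0)
        ⁻¹' {m | m < k} := by
      ext ω
      show (Finset.univ.filter fun i => S i ω < S j ω).card < k
        ↔ (∑ i : Fin (n + 1), if S i ω < S j ω then (1:ℕ) else 0) < k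
      rw [Finset.card_filter]
    rw [hrw]
    have hm : Measurable fun ω => ∑ i : Fin (n + 1), if S i ω < S j ω then (1:ℕ) else 0 :=
      Finset.measurable_sum _ fun i _ =>
        Measurable.ite (measurableSet_lt (hSmeas i) (hSmeas j))
          measurable_const measurable_const
    exact hm MeasurableSet.of_discrete
  -- the events as preimages of sets in path space
  set B : Fin (n + 1) → Set (Fin (n + 1) → 𝒳 × 𝒴) :=
    fun j => {f | (Finset.univ.filter fun i => s (f i) < s (f j)).card < k} with hBdef
  have hBmeas : ∀ j, MeasurableSet (B j) := by
    intro j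
    have hrw : B j = (fun f => ∑ i : Fin (n + 1), if s (f i) < s (f j) then (1:ℕ) else 0)
        ⁻¹' {m | m < k} := by
      ext f
      show (Finset.univ.filter fun i => s (f i) < s (f j)).card < k
        ↔ (∑ i : Fin (n + 1), if s (f i) < s (f j) then (1:ℕ) else 0) < k
      rw [Finset.card_filter]
    rw [hrw]
    have hm : Measurable fun f : Fin (n + 1) → 𝒳 × 𝒴 =>
        ∑ i : Fin (n + 1), if s (f i) < s (f j) then (1:ℕ) else 0 :=
      Finset.measurable_sum _ fun i _ =>
        Measurable.ite
          (measurableSet_lt (hs.comp (measurable_pi_apply i)) (hs.comp (measurable_pi_apply j)))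
          measurable_const measurable_const
    exact hm MeasurableSet.of_discrete
  have hmap : Measurable (fun ω => fun i : Fin (n + 1) => Z i ω) :=
    measurable_pi_lambda _ hZ
  -- exchangeability: all events have the same probability
  have hEeq : ∀ j, μ (E j) = μ (E (Fin.last n)) := by
    intro j
    set σ : Equiv.Perm (Fin (n + 1)) := Equiv.swap j (Fin.last n) with hσ
    have hmapσ : Measurable (fun ω => fun i : Fin (n + 1) => Z (σ i) ω) :=
      measurable_pi_lambda _ fun i => hZ (σ i)
    have h1 : μ (E j) = (Measure.map (fun ω => fun i => Z i ω) μ) (B j) := by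
      rw [Measure.map_apply hmap (hBmeas j)]
      rfl
    rw [h1, ← hexch σ, Measure.map_apply hmapσ (hBmeas j)]
    congr 1
    ext ω
    have hc : (Finset.univ.filter fun i => s (Z (σ i) ω) < s (Z (σ j) ω)).card
        = (Finset.univ.filter fun i => S i ω < S (σ j) ω).card := by
      rw [Finset.card_filter, Finset.card_filter]
      exact Equiv.sum_comp σ (fun i => if S i ω < S (σ j) ω then (1:ℕ) else 0)
    simp only [Set.mem_preimage, hBdef, Set.mem_setOf_eq, hEdef]
    rw [hc, hσ, Equiv.swap_apply_left]
  -- pointwise: at least k of the events occur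
  have hpoint : ∀ ω, k ≤ (Finset.univ.filter fun j : Fin (n + 1) => ω ∈ E j).card := by
    intro ω
    have hchar : ∀ j, ω ∈ E j ↔ S j ω ≤ kthSmallest (fun i => S i ω) k := by
      intro j
      rw [SCMC.le_kthSmallest_iff _ k hk1 (by omega)]
      exact Iff.rfl
    have : (Finset.univ.filter fun j : Fin (n + 1) => ω ∈ E j)
        = Finset.univ.filter fun j => S j ω ≤ kthSmallest (fun i => S i ω) k :=
      Finset.filter_congr fun j _ => by rw [hchar j]
    rw [this]
    exact SCMC.card_le_kthSmallest _ k hk1 (by omega)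
  -- summing the probabilities
  have hsum : (k : ℝ≥0∞) ≤ ∑ j : Fin (n + 1), μ (E j) := by
    have hle : ∀ ω, (k : ℝ≥0∞)
        ≤ ∑ j : Fin (n + 1), (E j).indicator (fun _ => (1:ℝ≥0∞)) ω := by
      intro ω
      have : ∑ j : Fin (n + 1), (E j).indicator (fun _ => (1:ℝ≥0∞)) ω
          = ((Finset.univ.filter fun j : Fin (n + 1) => ω ∈ E j).card : ℝ≥0∞) := by
        rw [Finset.card_filter]
        push_cast
        refine Finset.sum_congr rfl fun j _ => ?_
        by_cases h : ω ∈ E j <;> simp [h, Set.indicator_apply]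
      rw [this]
      exact_mod_cast Nat.cast_le.mpr (hpoint ω)
    calc (k : ℝ≥0∞) = ∫⁻ _, (k : ℝ≥0∞) ∂μ := by simp
      _ ≤ ∫⁻ ω, ∑ j : Fin (n + 1), (E j).indicator (fun _ => (1:ℝ≥0∞)) ω ∂μ :=
          lintegral_mono fun ω => hle ω
      _ = ∑ j : Fin (n + 1), ∫⁻ ω, (E j).indicator (fun _ => (1:ℝ≥0∞)) ω ∂μ :=
          lintegral_finset_sum _ fun j _ =>
            (measurable_const.indicator (hEmeas j))
      _ = ∑ j : Fin (n + 1), μ (E j) := by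
          refine Finset.sum_congr rfl fun j _ => ?_
          exact lintegral_indicator_one (hEmeas j)
  have hconst : ∑ j : Fin (n + 1), μ (E j) = ((n : ℝ≥0∞) + 1) * μ (E (Fin.last n)) := by
    rw [Finset.sum_congr rfl fun j _ => hEeq j, Finset.sum_const, Finset.card_univ,
      Fintype.card_fin, nsmul_eq_mul]
    push_cast
    ring
  have hmain : (k : ℝ≥0∞) ≤ ((n : ℝ≥0∞) + 1) * μ (E (Fin.last n)) := hconst ▸ hsum
  -- the goal set equals E (last n)
  have hset : {ω | s (Z (Fin.last n) ω) ≤ qhat ω} = E (Fin.last n) := by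
    ext ω
    rw [Set.mem_setOf_eq, hqhat ω, SCMC.le_kthSmallest_iff _ k hk1 hk]
    show (Finset.univ.filter fun i : Fin n => s (Z i.castSucc ω) < s (Z (Fin.last n) ω)).card < k
      ↔ (Finset.univ.filter fun i : Fin (n + 1) => S i ω < S (Fin.last n) ω).card < k
    have hc : (Finset.univ.filter fun i : Fin (n + 1) => S i ω < S (Fin.last n) ω).card
        = (Finset.univ.filter fun i : Fin n => s (Z i.castSucc ω) < s (Z (Fin.last n) ω)).card := by
      rw [Finset.card_filter, Finset.card_filter, Fin.sum_univ_castSucc]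
      simp [hSdef]
    rw [hc]
  rw [hset]
  -- final arithmetic
  have h2 : ((n : ℝ≥0∞) + 1) * ENNReal.ofReal (1 - α) ≤ (k : ℝ≥0∞) := by
    have hcast : ((n : ℝ≥0∞) + 1) = ENNReal.ofReal ((n : ℝ) + 1) := by
      rw [ENNReal.ofReal_add (by positivity) (by norm_num), ENNReal.ofReal_natCast,
        ENNReal.ofReal_one]
    rw [hcast, ← ENNReal.ofReal_mul (by positivity)]
    have : ((n : ℝ) + 1) * (1 - α) ≤ (k : ℝ) := Nat.le_ceil _
    calc ENNReal.ofReal (((n : ℝ) + 1) * (1 - α)) ≤ ENNReal.ofReal (k : ℝ) :=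
          ENNReal.ofReal_le_ofReal this
      _ = (k : ℝ≥0∞) := ENNReal.ofReal_natCast k
  have h3 : ((n : ℝ≥0∞) + 1) * ENNReal.ofReal (1 - α)
      ≤ ((n : ℝ≥0∞) + 1) * μ (E (Fin.last n)) := h2.trans hmain
  have hne0 : ((n : ℝ≥0∞) + 1) ≠ 0 := by simp
  have hnetop : ((n : ℝ≥0∞) + 1) ≠ ⊤ := by simp [ENNReal.add_ne_top]
  exact (ENNReal.mul_le_mul_iff_right hne0 hnetop).mp h3
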